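/- Let N, K ≥ 1 and let Ψ = Σ_v α_v |v⟩ Σ_j β_{v,j}|j⟩ be a graph coloring state (unit vector in ℂ^N ⊗ ℂ^K, with Σ_j |β_{v,j}|² = 1 for all v). Fix ε ∈ [0,1]. Suppose p_0(Ψ) ≥ 1/(4K) (probability of measuring color 0 after applying I_N ⊗ F_K) and |{v : |α_v|² < 1/(8K N)}| ≥ εN. Then the uniformity test rejects Ψ with probability at least ε²/(64K); i.e., the probability of measuring color 0 and a nonzero vertex outcome after applying F_N ⊗ F_K to Ψ is at least ε²/(64K). -/

import Mathlib

set_option maxHeartbeats 1000000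

open Finset Complex in
private lemma stmt13_orth {N : ℕ} (hN : 0 < N) (w w' : Fin N) :
    ∑ v : Fin N, Complex.exp (2 * Real.pi * Complex.I * ((v:ℕ) * (w:ℕ) / N)) *
      (starRingEnd ℂ) (Complex.exp (2 * Real.pi * Complex.I * ((v:ℕ) * (w':ℕ) / N)))
      = if w = w' then (N:ℂ) else 0 := by
  have hNC : (N:ℂ) ≠ 0 := Nat.cast_ne_zero.mpr hN.ne'
  set z : ℂ := Complex.exp (2 * Real.pi * Complex.I * (((w:ℕ):ℂ) - ((w':ℕ):ℂ)) / N) with hz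
  have hterm : ∀ v : Fin N,
      Complex.exp (2 * Real.pi * Complex.I * ((v:ℕ) * (w:ℕ) / N)) *
      (starRingEnd ℂ) (Complex.exp (2 * Real.pi * Complex.I * ((v:ℕ) * (w':ℕ) / N))) = z ^ (v:ℕ) := by
    intro v
    rw [← Complex.exp_conj, ← Complex.exp_add, ← Complex.exp_nat_mul]
    congr 1
    simp only [map_mul, map_div₀, Complex.conj_I, map_ofNat, Complex.conj_natCast]
    rw [Complex.conj_ofReal]
    ring
  rw [Finset.sum_congr rfl (fun v _ => hterm v), Fin.sum_univ_eq_sum_range (fun i => z ^ i)]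
  by_cases hww : w = w'
  · subst hww
    have : z = 1 := by rw [hz]; simp
    simp [this]
  · have hzN : z ^ N = 1 := by
      rw [hz, ← Complex.exp_nat_mul]
      have : (N:ℂ) * (2 * Real.pi * Complex.I * (((w:ℕ):ℂ) - ((w':ℕ):ℂ)) / N)
          = (((w:ℤ) - (w':ℤ) : ℤ) : ℂ) * (2 * Real.pi * Complex.I) := by
        push_cast
        field_simp
      rw [this, Complex.exp_int_mul_two_pi_mul_I]
    have hz1 : z ≠ 1 := by
      intro h
      rw [hz, Complex.exp_eq_one_iff] at h
      obtain ⟨n, hn⟩ := h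
      have h2πI : (2 * Real.pi * Complex.I) ≠ 0 := by
        simp [Real.pi_ne_zero, Complex.I_ne_zero, Complex.ofReal_ne_zero]
      have hc : (2 * Real.pi * Complex.I) * ((((w:ℕ):ℂ) - ((w':ℕ):ℂ))) =
          (2 * Real.pi * Complex.I) * ((n:ℂ) * N) := by
        field_simp at hn
        linear_combination (2 * Real.pi * Complex.I) * hn
      have hint : ((w:ℕ):ℤ) - ((w':ℕ):ℤ) = n * N := by
        have := mul_left_cancel₀ h2πI hc
        exact_mod_cast this
      have hw := w.isLt; have hw' := w'.isLt
      have hne : ((w:ℕ):ℤ) ≠ ((w':ℕ):ℤ) := by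
        simpa [Fin.val_injective.ne_iff] using (Fin.val_ne_of_ne hww)
      rcases lt_trichotomy n 0 with h0 | h0 | h0 <;> [nlinarith; (simp [h0] at hint; omega); nlinarith]
    rw [geom_sum_eq hz1, hzN]
    simp [hww]

open Finset Complex in
private lemma stmt13_parseval {N : ℕ} (hN : 0 < N) (γ : Fin N → ℂ) :
    ∑ v : Fin N, ‖∑ w : Fin N, Complex.exp (2 * Real.pi * Complex.I * ((v:ℕ) * (w:ℕ) / N)) * γ w‖^2
      = N * ∑ w, ‖γ w‖^2 := by
  set e : Fin N → Fin N → ℂ := fun v w => Complex.exp (2 * Real.pi * Complex.I * ((v:ℕ) * (w:ℕ) / N)) with he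
  set S : Fin N → ℂ := fun v => ∑ w, e v w * γ w with hS
  have key : ∑ v, S v * (starRingEnd ℂ) (S v) = (N:ℂ) * ∑ w, γ w * (starRingEnd ℂ) (γ w) := by
    have expand : ∀ v, S v * (starRingEnd ℂ) (S v)
        = ∑ w, ∑ w', (γ w * (starRingEnd ℂ) (γ w')) * (e v w * (starRingEnd ℂ) (e v w')) := by
      intro v
      rw [hS, map_sum, Finset.sum_mul_sum]
      refine Finset.sum_congr rfl fun w _ => Finset.sum_congr rfl fun w' _ => ?_
      rw [map_mul]; ring
    calc ∑ v, S v * (starRingEnd ℂ) (S v)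
        = ∑ v, ∑ w, ∑ w', (γ w * (starRingEnd ℂ) (γ w')) * (e v w * (starRingEnd ℂ) (e v w')) :=
          Finset.sum_congr rfl fun v _ => expand v
      _ = ∑ w, ∑ w', ∑ v, (γ w * (starRingEnd ℂ) (γ w')) * (e v w * (starRingEnd ℂ) (e v w')) := by
          rw [Finset.sum_comm]
          exact Finset.sum_congr rfl fun w _ => Finset.sum_comm
      _ = ∑ w, ∑ w', (γ w * (starRingEnd ℂ) (γ w')) * (if w = w' then (N:ℂ) else 0) := by
          refine Finset.sum_congr rfl fun w _ => Finset.sum_congr rfl fun w' _ => ?_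
          rw [← Finset.mul_sum, stmt13_orth hN w w']
      _ = (N:ℂ) * ∑ w, γ w * (starRingEnd ℂ) (γ w) := by
          rw [Finset.mul_sum]
          refine Finset.sum_congr rfl fun w _ => ?_
          simp only [mul_ite, mul_zero, Finset.sum_ite_eq, Finset.mem_univ, if_true]
          ring
  have lhsC : ∀ z : ℂ, z * (starRingEnd ℂ) z = ((‖z‖^2 : ℝ) : ℂ) := by
    intro z; rw [Complex.mul_conj]; norm_cast; rw [Complex.normSq_eq_norm_sq]
  simp_rw [lhsC] at key
  show ∑ v, ‖S v‖^2 = (N:ℝ) * ∑ w, ‖γ w‖^2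
  exact_mod_cast key

open Finset Complex in
private lemma stmt13_aux {N K : ℕ} (hN : 0 < N) (hK : 0 < K) (ε : ℝ) (hε0 : 0 ≤ ε)
    (γ : Fin N → ℂ) (L : Finset (Fin N))
    (hp0 : 1 / (4 * K) ≤ ∑ v, ‖γ v‖ ^ 2)
    (hLb : ∀ v ∈ L, ‖γ v‖ ^ 2 < 1 / (8 * K * N))
    (hlight : ε * N ≤ (L.card : ℝ)) :
    ε ^ 2 / (64 * K) ≤
      ∑ v ∈ Finset.univ.filter (fun v : Fin N => (v : ℕ) ≠ 0),
        ‖(1 / Real.sqrt N : ℂ) *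
          ∑ w : Fin N, Complex.exp (2 * Real.pi * Complex.I * ((v : ℕ) * (w : ℕ) / N)) * γ w‖ ^ 2 := by
  haveI : NeZero N := ⟨hN.ne'⟩
  have hKR : (0:ℝ) < K := by exact_mod_cast hK
  have hNR : (0:ℝ) < N := by exact_mod_cast hN
  set P : ℝ := ∑ v, ‖γ v‖ ^ 2 with hPdef
  set Ssum : ℝ := ∑ v, ‖γ v‖ with hSdef
  have hPpos : 0 < P := lt_of_lt_of_le (by positivity) hp0
  have hnorm_smul : ∀ z : ℂ, ‖(1 / Real.sqrt N : ℂ) * z‖ ^ 2 = (1/N) * ‖z‖ ^ 2 := by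
    intro z
    rw [norm_mul, mul_pow]
    congr 1
    rw [norm_div, norm_one, Complex.norm_real, Real.norm_eq_abs,
      _root_.abs_of_nonneg (Real.sqrt_nonneg _), div_pow, one_pow, Real.sq_sqrt hNR.le]
  have hfilter : Finset.univ.filter (fun v : Fin N => (v : ℕ) ≠ 0) = Finset.univ.erase 0 := by
    ext v
    simp only [Finset.mem_filter, Finset.mem_univ, true_and, Finset.mem_erase, and_true]
    exact not_congr Fin.val_eq_zero_iff
  rw [hfilter, Finset.sum_erase_eq_sub (Finset.mem_univ 0)]
  have htot : (∑ v : Fin N, ‖(1 / Real.sqrt N : ℂ) *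
      ∑ w : Fin N, Complex.exp (2 * Real.pi * Complex.I * ((v : ℕ) * (w : ℕ) / N)) * γ w‖ ^ 2) = P := by
    simp_rw [hnorm_smul]
    rw [← Finset.mul_sum, stmt13_parseval hN γ, ← hPdef]
    field_simp
  have hzero : ‖(1 / Real.sqrt N : ℂ) *
      ∑ w : Fin N, Complex.exp (2 * Real.pi * Complex.I * (((0 : Fin N) : ℕ) * (w : ℕ) / N)) * γ w‖ ^ 2
      = (1/N) * ‖∑ w, γ w‖ ^ 2 := by
    have h0 : (∑ w : Fin N, Complex.exp (2 * Real.pi * Complex.I * (((0 : Fin N) : ℕ) * (w : ℕ) / N)) * γ w)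
        = ∑ w, γ w := by
      refine Finset.sum_congr rfl fun w _ => ?_
      simp
    rw [h0, hnorm_smul]
  rw [htot, hzero]
  -- now: ε^2/(64K) ≤ P - (1/N) * ‖∑ γ‖^2
  have hSle : ‖∑ w, γ w‖ ≤ Ssum := by
    rw [hSdef]; exact norm_sum_le _ _
  have hF0 : (1/N) * ‖∑ w, γ w‖ ^ 2 ≤ (1/N) * Ssum ^ 2 :=
    mul_le_mul_of_nonneg_left (pow_le_pow_left₀ (norm_nonneg _) hSle 2) (by positivity)
  suffices hfin : ε ^ 2 / (64 * K) ≤ P - (1/N) * Ssum ^ 2 by linarith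
  -- deviation argument
  set m : ℝ := Real.sqrt (P / N) with hmdef
  have hm : m ^ 2 = P / N := Real.sq_sqrt (div_nonneg hPpos.le hNR.le)
  have hm0 : 0 ≤ m := Real.sqrt_nonneg _
  have cs : (∑ v, |‖γ v‖ - m| * (‖γ v‖ + m)) ^ 2
      ≤ (∑ v, (‖γ v‖ - m) ^ 2) * (∑ v, (‖γ v‖ + m) ^ 2) := by
    have h := Finset.sum_mul_sq_le_sq_mul_sq Finset.univ (fun v => |‖γ v‖ - m|) (fun v => ‖γ v‖ + m)
    simpa [sq_abs] using h
  have e1 : ∑ v, (‖γ v‖ - m) ^ 2 = 2 * P - 2 * m * Ssum := by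
    have h : ∀ v : Fin N, (‖γ v‖ - m) ^ 2 = ‖γ v‖ ^ 2 - (2 * m) * ‖γ v‖ + m ^ 2 := fun v => by ring
    rw [Finset.sum_congr rfl fun v _ => h v, Finset.sum_add_distrib, Finset.sum_sub_distrib,
      ← Finset.mul_sum, Finset.sum_const, Finset.card_univ, Fintype.card_fin, nsmul_eq_mul,
      ← hPdef, ← hSdef, hm]
    field_simp
    ring
  have e2 : ∑ v, (‖γ v‖ + m) ^ 2 = 2 * P + 2 * m * Ssum := by
    have h : ∀ v : Fin N, (‖γ v‖ + m) ^ 2 = ‖γ v‖ ^ 2 + (2 * m) * ‖γ v‖ + m ^ 2 := fun v => by ring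
    rw [Finset.sum_congr rfl fun v _ => h v, Finset.sum_add_distrib, Finset.sum_add_distrib,
      ← Finset.mul_sum, Finset.sum_const, Finset.card_univ, Fintype.card_fin, nsmul_eq_mul,
      ← hPdef, ← hSdef, hm]
    field_simp
    ring
  set D : ℝ := ∑ v, |‖γ v‖ ^ 2 - P / N| with hDdef
  have eD : ∀ v : Fin N, |‖γ v‖ - m| * (‖γ v‖ + m) = |‖γ v‖ ^ 2 - P / N| := by
    intro v
    rw [← _root_.abs_of_nonneg (add_nonneg (norm_nonneg (γ v)) hm0), ← abs_mul]
    congr 1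
    rw [← hm]
    ring
  have hub : D ^ 2 ≤ 4 * P * (P - (1/N) * Ssum ^ 2) := by
    have cs' : D ^ 2 ≤ (2 * P - 2 * m * Ssum) * (2 * P + 2 * m * Ssum) := by
      rw [hDdef, ← Finset.sum_congr rfl fun v _ => eD v, ← e1, ← e2]
      exact cs
    have : (2 * P - 2 * m * Ssum) * (2 * P + 2 * m * Ssum) = 4 * P * (P - (1/N) * Ssum ^ 2) := by
      calc (2 * P - 2 * m * Ssum) * (2 * P + 2 * m * Ssum)
          = 4 * P ^ 2 - 4 * m ^ 2 * Ssum ^ 2 := by ring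
        _ = 4 * P ^ 2 - 4 * (P / N) * Ssum ^ 2 := by rw [hm]
        _ = 4 * P * (P - (1/N) * Ssum ^ 2) := by ring
    linarith [cs', this.le, this.ge]
  have hDlow : ε * P / 2 ≤ D := by
    have step1 : ∀ v ∈ L, P / (2 * N) ≤ |‖γ v‖ ^ 2 - P / N| := by
      intro v hv
      have h1 : ‖γ v‖ ^ 2 < 1 / (8 * K * N) := hLb v hv
      have h2 : 1 / (8 * K * N) ≤ P / (2 * N) := by
        rw [div_le_div_iff₀ (by positivity) (by positivity)]
        rw [div_le_iff₀ (by positivity)] at hp0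
        nlinarith
      have h3 : ‖γ v‖ ^ 2 < P / (2 * N) := lt_of_lt_of_le h1 h2
      have hhalf : P / N = P / (2 * N) + P / (2 * N) := by field_simp; ring
      have hq : 0 < P / (2 * N) := div_pos hPpos (by positivity)
      rw [abs_sub_comm, _root_.abs_of_nonneg (by linarith : (0:ℝ) ≤ P / N - ‖γ v‖ ^ 2)]
      linarith
    calc ε * P / 2 = (ε * N) * (P / (2 * N)) := by field_simp
      _ ≤ (L.card : ℝ) * (P / (2 * N)) := by
          exact mul_le_mul_of_nonneg_right hlight
            (div_nonneg hPpos.le (by positivity))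
      _ = ∑ _v ∈ L, P / (2 * N) := by rw [Finset.sum_const, nsmul_eq_mul]
      _ ≤ ∑ v ∈ L, |‖γ v‖ ^ 2 - P / N| := Finset.sum_le_sum step1
      _ ≤ D := Finset.sum_le_sum_of_subset_of_nonneg (Finset.subset_univ L)
          (fun v _ _ => abs_nonneg _)
  have hD2 : ε ^ 2 * P ^ 2 / 4 ≤ D ^ 2 := by
    have h := pow_le_pow_left₀ (div_nonneg (mul_nonneg hε0 hPpos.le) (by norm_num)) hDlow 2
    calc ε ^ 2 * P ^ 2 / 4 = (ε * P / 2) ^ 2 := by ring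
      _ ≤ D ^ 2 := h
  have h2 : ε ^ 2 * P / 16 ≤ P - (1/N) * Ssum ^ 2 := by
    nlinarith [hD2, hub, hPpos, sq_nonneg ε]
  have h3 : ε ^ 2 / (64 * K) ≤ ε ^ 2 * P / 16 := by
    have : ε ^ 2 / (64 * K) = ε ^ 2 * (1 / (4 * K)) / 16 := by ring
    rw [this]
    gcongr
  linarith



open Finset Real in
/-- If the color `0` is measured with probability at least `1/(4K)` after `I_N ⊗ F_K`, and at
least `εN` vertices are light (`|α_v|² < 1/(8KN)`), then the uniformity test (measure
`(F_N ⊗ F_K)Ψ` and reject on color `0` with nonzero vertex) rejects with probability at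
least `ε²/(64K)`. -/
theorem stmt_13 {N K : ℕ} (hN : 0 < N) (hK : 0 < K) (ε : ℝ) (hε0 : 0 ≤ ε) (hε1 : ε ≤ 1)
    (α : Fin N → ℂ) (β : Fin N → Fin K → ℂ)
    (hα : ∑ v, ‖α v‖ ^ 2 = 1) (hβ : ∀ v, ∑ j, ‖β v j‖ ^ 2 = 1)
    (hp0 : 1 / (4 * K) ≤ ∑ v, ‖α v * ((1 / Real.sqrt K : ℂ) * ∑ j, β v j)‖ ^ 2)
    (hlight : ε * N ≤
      ((Finset.univ.filter fun v : Fin N => ‖α v‖ ^ 2 < 1 / (8 * K * N)).card : ℝ)) :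
    ε ^ 2 / (64 * K) ≤
      ∑ v ∈ Finset.univ.filter (fun v : Fin N => (v : ℕ) ≠ 0),
        ‖(1 / Real.sqrt N : ℂ) *
          ∑ w : Fin N, Complex.exp (2 * Real.pi * Complex.I * ((v : ℕ) * (w : ℕ) / N)) *
            (α w * ((1 / Real.sqrt K : ℂ) * ∑ j, β w j))‖ ^ 2 := by
  have hKR : (0:ℝ) < K := by exact_mod_cast hK
  have hγle : ∀ v : Fin N, ‖α v * ((1 / Real.sqrt K : ℂ) * ∑ j, β v j)‖ ≤ ‖α v‖ := by
    intro v
    rw [norm_mul, norm_mul]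
    have h1 : ‖(1 / Real.sqrt K : ℂ)‖ = 1 / Real.sqrt K := by
      rw [norm_div, norm_one, Complex.norm_real, Real.norm_eq_abs,
        _root_.abs_of_nonneg (Real.sqrt_nonneg _)]
    have hb : ∑ j, ‖β v j‖ ≤ Real.sqrt K := by
      have hc := sq_sum_le_card_mul_sum_sq (s := (Finset.univ : Finset (Fin K)))
        (f := fun j => ‖β v j‖)
      rw [hβ v, Finset.card_univ, Fintype.card_fin, mul_one] at hc
      have h0 : (0:ℝ) ≤ ∑ j, ‖β v j‖ := Finset.sum_nonneg fun j _ => norm_nonneg _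
      nlinarith [Real.sq_sqrt hKR.le, Real.sqrt_nonneg (K:ℝ)]
    have h2 : ‖∑ j, β v j‖ ≤ Real.sqrt K := le_trans (norm_sum_le _ _) hb
    have hsK : 0 < Real.sqrt K := Real.sqrt_pos.mpr hKR
    calc ‖α v‖ * (‖(1 / Real.sqrt K : ℂ)‖ * ‖∑ j, β v j‖)
        ≤ ‖α v‖ * ((1 / Real.sqrt K) * Real.sqrt K) := by
          rw [h1]
          gcongr
      _ = ‖α v‖ := by field_simp
  refine stmt13_aux hN hK ε hε0 (fun w => α w * ((1 / Real.sqrt K : ℂ) * ∑ j, β w j))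
    (Finset.univ.filter fun v : Fin N => ‖α v‖ ^ 2 < 1 / (8 * K * N)) hp0 ?_ hlight
  intro v hv
  rw [Finset.mem_filter] at hv
  have := pow_le_pow_left₀ (norm_nonneg _) (hγle v) 2
  exact lt_of_le_of_lt this hv.2
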